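/- arXiv:2310.16707 — 3 statements merged into one kernel-verified Lean document; each statement's English description precedes it below -/
import Mathlib

section
/- Let (E, ‖·‖) be a normed vector space, D ⊆ E, and let S : [0,∞) × D → D be a semigroup, i.e. S_0 w = w and S_s(S_t w) = S_{s+t} w for all w ∈ D, s,t ≥ 0, satisfying the Lipschitz estimate ‖S_t u − S_s v‖ ≤ L·‖u − v‖ + L'·|t − s| for all u,v ∈ D and s,t ≥ 0, with constants L, L'. Then for every Lipschitz continuous map w : [0,T] → D one has ‖ w(T) − S_T w(0) ‖ ≤ L · ∫₀ᵀ ( liminf_{h→0+} ‖ w(t+h) − S_h w(t) ‖ / h ) dt. -/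
open MeasureTheory Filter Set Topology

noncomputable section

lemma aux_liminf_eq_iSup {u : ℝ → ℝ} {C : ℝ} (h0 : ∀ h : ℝ, 0 < h → 0 ≤ u h)
    (hC : ∀ h : ℝ, 0 < h → u h ≤ C) :
    Filter.liminf u (𝓝[>] (0:ℝ)) =
      ⨆ n : ℕ, ⨅ h : Set.Ioo (0:ℝ) (1/(n+1)), u h := by
  have hpos : ∀ n : ℕ, (0:ℝ) < 1/(n+1) := by
    intro n; positivity
  have hne : ∀ n : ℕ, (Set.Ioo (0:ℝ) (1/(n+1))).Nonempty := fun n => nonempty_Ioo.2 (hpos n)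
  haveI : ∀ n : ℕ, Nonempty (Set.Ioo (0:ℝ) (1/(n+1))) := fun n => (hne n).to_subtype
  have hbdd : ∀ n : ℕ, BddBelow (Set.range fun h : Set.Ioo (0:ℝ) (1/(n+1)) => u h) := by
    intro n
    refine ⟨0, ?_⟩
    rintro x ⟨⟨h, hh⟩, rfl⟩
    exact h0 h hh.1
  set g : ℕ → ℝ := fun n => ⨅ h : Set.Ioo (0:ℝ) (1/(n+1)), u h with hg
  have hgC : ∀ n, g n ≤ C := by
    intro n
    obtain ⟨h, hh⟩ := hne n
    exact le_trans (ciInf_le (hbdd n) ⟨h, hh⟩) (hC h hh.1)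
  have hbddA : BddAbove (Set.range g) := by
    refine ⟨C, ?_⟩; rintro x ⟨n, rfl⟩; exact hgC n
  apply le_antisymm
  · rw [Filter.liminf_eq]
    apply csSup_le
    · exact ⟨0, eventually_mem_nhdsWithin.mono fun h hh => h0 h hh⟩
    · intro a ha
      obtain ⟨ε, hε, hsub⟩ := (nhdsGT_basis (0:ℝ)).mem_iff.1 ha
      obtain ⟨n, hn⟩ := exists_nat_one_div_lt hε
      refine le_trans ?_ (le_ciSup hbddA n)
      exact le_ciInf fun ⟨h, hh⟩ => hsub ⟨hh.1, hh.2.trans hn⟩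
  · apply ciSup_le
    intro n
    rw [Filter.liminf_eq]
    apply le_csSup
    · refine ⟨C, ?_⟩
      intro a ha
      have ha' : ∀ᶠ h in 𝓝[>] (0:ℝ), a ≤ u h := ha
      obtain ⟨h, hah, hh⟩ := (ha'.and eventually_mem_nhdsWithin).exists
      exact hah.trans (hC h hh)
    · show ∀ᶠ h in 𝓝[>] (0:ℝ), g n ≤ u h
      filter_upwards [Ioo_mem_nhdsGT (hpos n)] with h hh
      exact ciInf_le (hbdd n) ⟨h, hh⟩

set_option maxHeartbeats 1000000 in
/-- **Elementary error estimate for Lipschitz semigroups.**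
Let `S` be a semigroup on `D ⊆ E` satisfying
`‖S_t u - S_s v‖ ≤ L ‖u - v‖ + L' |t - s|`.  Then for every Lipschitz continuous
map `w : [0,T] → D`,
`‖w(T) - S_T w(0)‖ ≤ L ∫₀ᵀ liminf_{h→0+} ‖w(t+h) - S_h w(t)‖ / h dt`. -/
theorem semigroup_error_estimate
    {E : Type*} [NormedAddCommGroup E] [NormedSpace ℝ E]
    (D : Set E) (S : ℝ → E → E) (L L' : ℝ)
    (hmap : ∀ t : ℝ, 0 ≤ t → ∀ u ∈ D, S t u ∈ D)
    (hS0 : ∀ u ∈ D, S 0 u = u)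
    (hsemi : ∀ s t : ℝ, 0 ≤ s → 0 ≤ t → ∀ u ∈ D, S s (S t u) = S (s + t) u)
    (hLip : ∀ u ∈ D, ∀ v ∈ D, ∀ s t : ℝ, 0 ≤ s → 0 ≤ t →
      ‖S t u - S s v‖ ≤ L * ‖u - v‖ + L' * |t - s|)
    (T : ℝ) (hT : 0 ≤ T) (w : ℝ → E) (K : NNReal)
    (hw : LipschitzOnWith K w (Set.Icc 0 T))
    (hwD : ∀ t ∈ Set.Icc 0 T, w t ∈ D) :
    ‖w T - S T (w 0)‖ ≤
      L * ∫ t in (0:ℝ)..T,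
        Filter.liminf (fun h : ℝ => ‖w (t + h) - S h (w t)‖ / h) (𝓝[>] 0) := by
  rcases eq_or_lt_of_le hT with rfl | hTpos
  · have h0D : w 0 ∈ D := hwD 0 ⟨le_rfl, le_rfl⟩
    rw [intervalIntegral.integral_same, hS0 _ h0D]
    simp
  -- T > 0 from now on
  by_cases hsing : ∀ u ∈ D, ∀ v ∈ D, u = v
  · -- degenerate case : D has at most one point
    have h0D : w 0 ∈ D := hwD 0 ⟨le_rfl, hT⟩
    have hTD : w T ∈ D := hwD T ⟨hT, le_rfl⟩
    have hLHS : ‖w T - S T (w 0)‖ = 0 := by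
      rw [hsing _ hTD _ (hmap T hT _ h0D), sub_self, norm_zero]
    have hint : (∫ t in (0:ℝ)..T,
        Filter.liminf (fun h : ℝ => ‖w (t + h) - S h (w t)‖ / h) (𝓝[>] 0)) = 0 := by
      rw [intervalIntegral.integral_of_le hT]
      have hae : (fun t => Filter.liminf (fun h : ℝ => ‖w (t + h) - S h (w t)‖ / h) (𝓝[>] 0))
          =ᵐ[volume.restrict (Set.Ioc 0 T)] (fun _ => (0:ℝ)) := by
        rw [← Measure.restrict_congr_set MeasureTheory.Ioo_ae_eq_Ioc]
        filter_upwards [MeasureTheory.ae_restrict_mem measurableSet_Ioo] with t ht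
        have : ∀ᶠ h in 𝓝[>] (0:ℝ), ‖w (t + h) - S h (w t)‖ / h = 0 := by
          filter_upwards [Ioo_mem_nhdsGT (sub_pos.2 ht.2)] with h hh
          have h1 : w (t + h) ∈ D := hwD _ ⟨by linarith [ht.1, hh.1], by linarith [hh.2]⟩
          have h2 : S h (w t) ∈ D := hmap h hh.1.le _ (hwD t ⟨ht.1.le, ht.2.le⟩)
          rw [hsing _ h1 _ h2, sub_self, norm_zero, zero_div]
        rw [Filter.liminf_congr this, Filter.liminf_const]
      rw [MeasureTheory.integral_congr_ae hae, MeasureTheory.integral_zero]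
    rw [hLHS, hint, mul_zero]
  · push_neg at hsing
    obtain ⟨u₀, hu₀, v₀, hv₀, hne⟩ := hsing
    have hL1 : 1 ≤ L := by
      have h := hLip u₀ hu₀ v₀ hv₀ 0 0 le_rfl le_rfl
      rw [hS0 _ hu₀, hS0 _ hv₀] at h
      simp only [sub_self, abs_zero, mul_zero, add_zero] at h
      have hpos : 0 < ‖u₀ - v₀‖ := norm_pos_iff.2 (sub_ne_zero.2 hne)
      nlinarith
    have hL0 : (0:ℝ) < L := by linarith
    have hL'0 : (0:ℝ) ≤ L' := by
      have h := hLip u₀ hu₀ u₀ hu₀ 0 1 le_rfl zero_le_one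
      simp only [sub_self, norm_zero, mul_zero, sub_zero, abs_one, mul_one, zero_add] at h
      exact le_trans (norm_nonneg _) h
    -- ### Setup: clamped extension of `w`
    set c : ℝ → ℝ := fun t => max 0 (min t T) with hcdef
    have hc_mem : ∀ t, c t ∈ Set.Icc 0 T := fun t =>
      ⟨le_max_left _ _, max_le hT (min_le_right _ _)⟩
    have hc_eq : ∀ t ∈ Set.Icc 0 T, c t = t := fun t ht => by
      simp only [hcdef, min_eq_left ht.2, max_eq_right ht.1]
    have hc_lip : ∀ a b, |c a - c b| ≤ |a - b| := by
      intro a b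
      calc |c a - c b| = |max (min a T) 0 - max (min b T) 0| := by
            rw [hcdef]; simp only [max_comm]
        _ ≤ |min a T - min b T| := abs_max_sub_max_le_abs _ _ _
        _ ≤ max |a - b| |T - T| := abs_min_sub_min_le_max _ _ _ _
        _ = |a - b| := by simp
    set W : ℝ → E := fun t => w (c t) with hWdef
    have hWD : ∀ t, W t ∈ D := fun t => hwD _ (hc_mem t)
    have hWicc : ∀ t ∈ Set.Icc 0 T, W t = w t := fun t ht => by
      simp only [hWdef]; rw [hc_eq t ht]
    have hWlip : ∀ a b, ‖W a - W b‖ ≤ (K : ℝ) * |a - b| := by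
      intro a b
      have h := (lipschitzOnWith_iff_dist_le_mul.1 hw) _ (hc_mem a) _ (hc_mem b)
      rw [dist_eq_norm, Real.dist_eq] at h
      exact le_trans h (mul_le_mul_of_nonneg_left (hc_lip a b) K.coe_nonneg)
    have hWcont : Continuous W :=
      (LipschitzWith.of_dist_le_mul (K := K) fun a b => by
        rw [dist_eq_norm, Real.dist_eq]; exact hWlip a b).continuous
    -- ### The error-rate quotient
    set Q : ℝ → ℝ → ℝ := fun t h => ‖W (t + h) - S h (W t)‖ / h with hQdef
    have hQapp : ∀ t h, Q t h = ‖W (t + h) - S h (W t)‖ / h := fun _ _ => rfl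
    have hQ0 : ∀ t, ∀ h : ℝ, 0 < h → 0 ≤ Q t h := fun t h hh =>
      div_nonneg (norm_nonneg _) hh.le
    set C : ℝ := (K : ℝ) + L' with hCdef
    have hQC : ∀ t, ∀ h : ℝ, 0 < h → Q t h ≤ C := by
      intro t h hh
      rw [hQapp, div_le_iff₀ hh]
      have h1 : ‖W (t + h) - W t‖ ≤ (K : ℝ) * h := by
        have := hWlip (t + h) t
        simpa [abs_of_pos hh] using this
      have h2 : ‖W t - S h (W t)‖ ≤ L' * h := by
        have h3 := hLip (W t) (hWD t) (W t) (hWD t) 0 h le_rfl hh.le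
        rw [hS0 _ (hWD t)] at h3
        simp only [sub_self, norm_zero, mul_zero, sub_zero, zero_add] at h3
        rw [norm_sub_rev]
        calc ‖S h (W t) - W t‖ ≤ L' * |h| := h3
          _ = L' * h := by rw [abs_of_pos hh]
      calc ‖W (t + h) - S h (W t)‖ = dist (W (t + h)) (S h (W t)) := (dist_eq_norm _ _).symm
        _ ≤ dist (W (t + h)) (W t) + dist (W t) (S h (W t)) := dist_triangle _ _ _
        _ = ‖W (t + h) - W t‖ + ‖W t - S h (W t)‖ := by rw [dist_eq_norm, dist_eq_norm]
        _ ≤ (K : ℝ) * h + L' * h := add_le_add h1 h2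
        _ = C * h := by rw [hCdef]; ring
    -- ### The liminf error rate based on `W`
    set F : ℝ → ℝ := fun t => Filter.liminf (fun h => Q t h) (𝓝[>] (0:ℝ)) with hFdef
    have hFrep : ∀ t, F t = ⨆ n : ℕ, ⨅ h : Set.Ioo (0:ℝ) (1/(n+1)), Q t h := fun t =>
      aux_liminf_eq_iSup (hQ0 t) (hQC t)
    have hpos1 : ∀ n : ℕ, (0:ℝ) < 1/(n+1) := fun n => by positivity
    haveI : ∀ n : ℕ, Nonempty (Set.Ioo (0:ℝ) (1/(n+1))) := fun n =>
      (nonempty_Ioo.2 (hpos1 n)).to_subtype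
    set g : ℕ → ℝ → ℝ := fun n t => ⨅ h : Set.Ioo (0:ℝ) (1/(n+1)), Q t h with hgdef
    have hbddb : ∀ n t, BddBelow (Set.range fun h : Set.Ioo (0:ℝ) (1/(n+1)) => Q t h) := by
      intro n t
      refine ⟨0, ?_⟩
      rintro x ⟨⟨h, hh⟩, rfl⟩
      exact hQ0 t h hh.1
    have hgle : ∀ n t, g n t ≤ C := by
      intro n t
      obtain ⟨h, hh⟩ := nonempty_Ioo.2 (hpos1 n)
      exact le_trans (ciInf_le (hbddb n t) ⟨h, hh⟩) (hQC t h hh.1)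
    have hg0 : ∀ n t, 0 ≤ g n t := fun n t => le_ciInf fun i => hQ0 t i.1 i.2.1
    have hbdda : ∀ t, BddAbove (Set.range fun n : ℕ => g n t) := by
      intro t
      refine ⟨C, ?_⟩
      rintro x ⟨n, rfl⟩
      exact hgle n t
    have hF0 : ∀ t, 0 ≤ F t := fun t => by
      rw [hFrep t]
      exact le_trans (hg0 0 t) (le_ciSup (hbdda t) 0)
    have hFC : ∀ t, F t ≤ C := fun t => by
      rw [hFrep t]; exact ciSup_le fun n => hgle n t
    -- continuity of `Q · h`
    have hQcont : ∀ h : ℝ, 0 < h → Continuous fun t => Q t h := by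
      intro h hh
      apply Continuous.div_const
      apply Continuous.norm
      apply Continuous.sub
      · exact hWcont.comp (continuous_id.add continuous_const)
      · refine (LipschitzWith.of_dist_le_mul (K := (L * (K:ℝ)).toNNReal)
          (f := fun t => S h (W t)) fun a b => ?_).continuous
        rw [dist_eq_norm, Real.dist_eq]
        have h1 := hLip (W a) (hWD a) (W b) (hWD b) h h hh.le hh.le
        simp only [sub_self, abs_zero, mul_zero, add_zero] at h1
        calc ‖S h (W a) - S h (W b)‖ ≤ L * ‖W a - W b‖ := h1
          _ ≤ L * ((K:ℝ) * |a - b|) := mul_le_mul_of_nonneg_left (hWlip a b) hL0.le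
          _ = (L * (K:ℝ)) * |a - b| := by ring
          _ ≤ ((L * (K:ℝ)).toNNReal : ℝ) * |a - b| :=
              mul_le_mul_of_nonneg_right (Real.le_coe_toNNReal _) (abs_nonneg _)
    -- measurability of `F`
    have hgmeas : ∀ n, Measurable (g n) := by
      intro n
      apply measurable_of_Iio
      intro x
      have heq : g n ⁻¹' (Set.Iio x) =
          ⋃ i : Set.Ioo (0:ℝ) (1/(n+1)), {t | Q t i < x} := by
        ext t
        simp only [Set.mem_preimage, Set.mem_Iio, Set.mem_iUnion, Set.mem_setOf_eq]
        constructor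
        · intro hlt
          obtain ⟨i, hi⟩ := exists_lt_of_ciInf_lt hlt
          exact ⟨i, hi⟩
        · rintro ⟨i, hi⟩
          exact lt_of_le_of_lt (ciInf_le (hbddb n t) i) hi
      rw [heq]
      exact (isOpen_iUnion fun (i : Set.Ioo (0:ℝ) (1/(n+1))) =>
        isOpen_Iio.preimage (hQcont i.1 i.2.1)).measurableSet
    have hgmono : ∀ t, Monotone fun n => g n t := by
      intro t m n hmn
      apply le_ciInf
      rintro ⟨h, hh⟩
      refine ciInf_le (hbddb m t) ⟨h, ⟨hh.1, lt_of_lt_of_le hh.2 ?_⟩⟩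
      apply one_div_le_one_div_of_le (by positivity)
      exact add_le_add_left (Nat.cast_le.2 hmn) 1
    have hFtend : ∀ t, Filter.Tendsto (fun n => g n t) Filter.atTop (𝓝 (F t)) := by
      intro t
      rw [hFrep t]
      exact tendsto_atTop_ciSup (hgmono t) (hbdda t)
    have hFmeas : Measurable F :=
      measurable_of_tendsto_metrizable hgmeas (tendsto_pi_nhds.2 hFtend)
    -- ### The function `G`
    set G : ℝ → ℝ := fun t => ‖S (max (T - t) 0) (W t) - S T (W 0)‖ with hGdef
    have hGapp : ∀ t, G t = ‖S (max (T - t) 0) (W t) - S T (W 0)‖ := fun _ => rfl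
    set M : ℝ := L * (K : ℝ) + L' with hMdef
    have hM0 : 0 ≤ M := add_nonneg (mul_nonneg hL0.le K.coe_nonneg) hL'0
    have hGlipR : ∀ a b, |G a - G b| ≤ M * |a - b| := by
      intro a b
      have h1 : |G a - G b| ≤ ‖S (max (T - a) 0) (W a) - S (max (T - b) 0) (W b)‖ := by
        have := abs_norm_sub_norm_le (S (max (T - a) 0) (W a) - S T (W 0))
          (S (max (T - b) 0) (W b) - S T (W 0))
        rw [sub_sub_sub_cancel_right] at this
        exact this
      have h2 := hLip (W a) (hWD a) (W b) (hWD b) (max (T - b) 0) (max (T - a) 0)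
        (le_max_right _ _) (le_max_right _ _)
      have h3 : |max (T - a) 0 - max (T - b) 0| ≤ |a - b| := by
        calc |max (T - a) 0 - max (T - b) 0| ≤ |(T - a) - (T - b)| :=
              abs_max_sub_max_le_abs _ _ _
          _ = |a - b| := by rw [show (T - a) - (T - b) = -(a - b) by ring, abs_neg]
      calc |G a - G b| ≤ ‖S (max (T - a) 0) (W a) - S (max (T - b) 0) (W b)‖ := h1
        _ ≤ L * ‖W a - W b‖ + L' * |max (T - a) 0 - max (T - b) 0| := h2
        _ ≤ L * ((K : ℝ) * |a - b|) + L' * |a - b| :=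
            add_le_add (mul_le_mul_of_nonneg_left (hWlip a b) hL0.le)
              (mul_le_mul_of_nonneg_left h3 hL'0)
        _ = M * |a - b| := by rw [hMdef]; ring
    have hGlip : LipschitzWith M.toNNReal G := by
      apply LipschitzWith.of_dist_le_mul
      intro a b
      rw [Real.dist_eq, Real.dist_eq]
      exact le_trans (hGlipR a b)
        (mul_le_mul_of_nonneg_right (Real.le_coe_toNNReal M) (abs_nonneg _))
    have hGcont : Continuous G := hGlip.continuous
    have hW0 : W 0 = w 0 := hWicc 0 ⟨le_rfl, hT⟩
    have hG0 : G 0 = 0 := by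
      rw [hGapp, sub_zero, max_eq_left hT, hW0, sub_self, norm_zero]
    have hGT : G T = ‖w T - S T (w 0)‖ := by
      rw [hGapp, sub_self, max_self, hS0 _ (hWD T), hWicc T ⟨hT, le_rfl⟩, hW0]
    -- ### key one-sided estimate
    have hkey : ∀ t, 0 ≤ t → ∀ h : ℝ, 0 < h → t + h ≤ T →
        G (t + h) - G t ≤ L * ‖W (t + h) - S h (W t)‖ := by
      intro t ht h hh hth
      have e1 : max (T - (t + h)) 0 = T - t - h := by
        rw [max_eq_left (by linarith)]; ring
      have e2 : max (T - t) 0 = T - t := max_eq_left (by linarith)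
      have h1 : G (t + h) - G t ≤ ‖S (T - t - h) (W (t + h)) - S (T - t) (W t)‖ := by
        rw [hGapp, hGapp, e1, e2]
        have := norm_sub_norm_le (S (T - t - h) (W (t + h)) - S T (W 0))
          (S (T - t) (W t) - S T (W 0))
        rw [sub_sub_sub_cancel_right] at this
        exact this
      have h2 : S (T - t) (W t) = S (T - t - h) (S h (W t)) := by
        rw [hsemi (T - t - h) h (by linarith) hh.le _ (hWD t)]
        ring_nf
      have h3 := hLip (W (t + h)) (hWD (t + h)) (S h (W t)) (hmap h hh.le _ (hWD t))
        (T - t - h) (T - t - h) (by linarith) (by linarith)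
      simp only [sub_self, abs_zero, mul_zero, add_zero] at h3
      calc G (t + h) - G t ≤ ‖S (T - t - h) (W (t + h)) - S (T - t) (W t)‖ := h1
        _ = ‖S (T - t - h) (W (t + h)) - S (T - t - h) (S h (W t))‖ := by rw [h2]
        _ ≤ L * ‖W (t + h) - S h (W t)‖ := h3
    -- ### Rademacher and slope convergence
    have hdiff : ∀ᵐ t : ℝ, DifferentiableAt ℝ G t := hGlip.ae_differentiableAt
    have hslope_tendsto : ∀ t, DifferentiableAt ℝ G t →
        Filter.Tendsto (fun h : ℝ => h⁻¹ * (G (t + h) - G t)) (𝓝[>] 0) (𝓝 (deriv G t)) := by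
      intro t hd
      have := (hd.hasDerivAt).tendsto_slope_zero_right
      simpa [smul_eq_mul] using this
    have hderiv_bound : ∀ t, |deriv G t| ≤ M := by
      intro t
      by_cases hd : DifferentiableAt ℝ G t
      · have h2 := (hslope_tendsto t hd).abs
        apply le_of_tendsto h2
        filter_upwards [self_mem_nhdsWithin] with h hh
        have hh' : (0:ℝ) < h := hh
        have hb := hGlipR (t + h) t
        rw [show t + h - t = h by ring, abs_of_pos hh'] at hb
        rw [abs_mul, abs_inv, abs_of_pos hh']
        calc h⁻¹ * |G (t + h) - G t| ≤ h⁻¹ * (M * h) :=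
              mul_le_mul_of_nonneg_left hb (inv_nonneg.2 hh'.le)
          _ = M := by field_simp
      · rw [deriv_zero_of_not_differentiableAt hd, abs_zero]; exact hM0
    -- ### measure
    set μ : Measure ℝ := volume.restrict (Set.Ioc 0 T) with hμdef
    have hμIoo : μ = volume.restrict (Set.Ioo 0 T) :=
      (Measure.restrict_congr_set MeasureTheory.Ioo_ae_eq_Ioc).symm
    have hae_mem : ∀ᵐ t ∂μ, t ∈ Set.Ioo 0 T := by
      rw [hμIoo]; exact MeasureTheory.ae_restrict_mem measurableSet_Ioo
    -- ### a.e. derivative bound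
    have hae_deriv : ∀ᵐ t ∂μ, deriv G t ≤ L * F t := by
      filter_upwards [MeasureTheory.ae_restrict_of_ae hdiff, hae_mem] with t hd ht
      have htend := hslope_tendsto t hd
      rw [← htend.liminf_eq]
      have hQbdd_le : Filter.IsBoundedUnder (· ≤ ·) (𝓝[>] (0:ℝ)) (fun h => Q t h) :=
        Filter.isBoundedUnder_of_eventually_le (a := C)
          (by filter_upwards [self_mem_nhdsWithin] with h hh; exact hQC t h hh)
      have hQbdd_ge : Filter.IsBoundedUnder (· ≥ ·) (𝓝[>] (0:ℝ)) (fun h => Q t h) :=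
        Filter.isBoundedUnder_of_eventually_ge (a := 0)
          (by filter_upwards [self_mem_nhdsWithin] with h hh; exact hQ0 t h hh)
      have hLQbdd_le : Filter.IsBoundedUnder (· ≤ ·) (𝓝[>] (0:ℝ)) (fun h => L * Q t h) :=
        Filter.isBoundedUnder_of_eventually_le (a := L * C)
          (by filter_upwards [self_mem_nhdsWithin] with h hh
              exact mul_le_mul_of_nonneg_left (hQC t h hh) hL0.le)
      have hLQbdd_ge : Filter.IsBoundedUnder (· ≥ ·) (𝓝[>] (0:ℝ)) (fun h => L * Q t h) :=
        Filter.isBoundedUnder_of_eventually_ge (a := 0)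
          (by filter_upwards [self_mem_nhdsWithin] with h hh
              exact mul_nonneg hL0.le (hQ0 t h hh))
      have hstep : Filter.liminf (fun h : ℝ => h⁻¹ * (G (t + h) - G t)) (𝓝[>] 0)
          ≤ Filter.liminf (fun h => L * Q t h) (𝓝[>] 0) := by
        apply Filter.liminf_le_liminf
        · filter_upwards [Ioo_mem_nhdsGT (sub_pos.2 ht.2)] with h hh
          have hk := hkey t ht.1.le h hh.1 (by linarith [hh.2])
          have he : L * Q t h = h⁻¹ * (L * ‖W (t + h) - S h (W t)‖) := by
            rw [hQapp]; field_simp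
          rw [he]
          exact mul_le_mul_of_nonneg_left hk (inv_nonneg.2 hh.1.le)
        · exact htend.isBoundedUnder_ge
        · exact hLQbdd_le.isCoboundedUnder_ge
      refine hstep.trans (le_of_eq ?_)
      have hiso := (OrderIso.mulLeft₀ L hL0).liminf_apply (f := 𝓝[>] (0:ℝ))
        (u := fun h => Q t h) hQbdd_ge (hQbdd_le.isCoboundedUnder_ge)
        (by simpa [OrderIso.mulLeft₀_apply] using hLQbdd_ge)
        (by simpa [OrderIso.mulLeft₀_apply] using hLQbdd_le.isCoboundedUnder_ge)
      simp only [OrderIso.mulLeft₀_apply] at hiso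
      exact hiso.symm
    -- ### sequence of difference quotients
    have hnto0 : Filter.Tendsto (fun n : ℕ => 1/((n:ℝ)+1)) Filter.atTop (𝓝[>] (0:ℝ)) := by
      apply tendsto_nhdsWithin_of_tendsto_nhds_of_eventually_within
      · exact tendsto_one_div_add_atTop_nhds_zero_nat
      · exact Filter.Eventually.of_forall fun n => hpos1 n
    set Sl : ℕ → ℝ → ℝ := fun n t => (1/((n:ℝ)+1))⁻¹ * (G (t + 1/((n:ℝ)+1)) - G t) with hSldef
    have hSlcont : ∀ n, Continuous (Sl n) := fun n =>
      continuous_const.mul ((hGcont.comp (continuous_id.add continuous_const)).sub hGcont)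
    have hSlbound : ∀ n t, ‖Sl n t‖ ≤ M := by
      intro n t
      have hb := hGlipR (t + 1/((n:ℝ)+1)) t
      rw [show t + 1/((n:ℝ)+1) - t = 1/((n:ℝ)+1) by ring, abs_of_pos (hpos1 n)] at hb
      rw [Real.norm_eq_abs, hSldef]
      simp only
      rw [abs_mul, abs_inv, abs_of_pos (hpos1 n)]
      calc (1/((n:ℝ)+1))⁻¹ * |G (t + 1/((n:ℝ)+1)) - G t|
          ≤ (1/((n:ℝ)+1))⁻¹ * (M * (1/((n:ℝ)+1))) :=
            mul_le_mul_of_nonneg_left hb (inv_nonneg.2 (hpos1 n).le)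
        _ = M := by field_simp
    have hSl_tendsto : ∀ᵐ t ∂μ, Filter.Tendsto (fun n => Sl n t) Filter.atTop (𝓝 (deriv G t)) := by
      filter_upwards [MeasureTheory.ae_restrict_of_ae hdiff] with t hd
      exact (hslope_tendsto t hd).comp hnto0
    have hderiv_meas : Measurable (deriv G) := measurable_deriv G
    have hDCT : Filter.Tendsto (fun n => ∫ t, Sl n t ∂μ) Filter.atTop
        (𝓝 (∫ t, deriv G t ∂μ)) := by
      apply MeasureTheory.tendsto_integral_of_dominated_convergence (bound := fun _ => M)
      · exact fun n => (hSlcont n).aestronglyMeasurable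
      · exact MeasureTheory.integrable_const M
      · exact fun n => Filter.Eventually.of_forall fun t => hSlbound n t
      · exact hSl_tendsto
    -- ### explicit value of the limit
    set Φ : ℝ → ℝ := fun x => ∫ u in (0:ℝ)..x, G u with hΦdef
    have hΦderiv : ∀ b : ℝ, HasDerivAt Φ (G b) b := by
      intro b
      exact intervalIntegral.integral_hasDerivAt_right (hGcont.intervalIntegrable 0 b)
        (hGcont.stronglyMeasurable.stronglyMeasurableAtFilter)
        hGcont.continuousAt
    have hint_eq : ∀ n : ℕ, ∫ t, Sl n t ∂μ =
        (1/((n:ℝ)+1))⁻¹ * (Φ (T + 1/((n:ℝ)+1)) - Φ T)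
          - (1/((n:ℝ)+1))⁻¹ * (Φ (0 + 1/((n:ℝ)+1)) - Φ 0) := by
      intro n
      have h1 : ∫ t, Sl n t ∂μ = ∫ t in (0:ℝ)..T, Sl n t :=
        (intervalIntegral.integral_of_le hT).symm
      have h2 : ∫ t in (0:ℝ)..T, Sl n t
          = (1/((n:ℝ)+1))⁻¹ * ∫ t in (0:ℝ)..T, (G (t + 1/((n:ℝ)+1)) - G t) := by
        rw [← intervalIntegral.integral_const_mul]
      have h3 : (∫ t in (0:ℝ)..T, (G (t + 1/((n:ℝ)+1)) - G t))
          = (∫ t in (0:ℝ)..T, G (t + 1/((n:ℝ)+1))) - ∫ t in (0:ℝ)..T, G t :=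
        intervalIntegral.integral_sub
          ((hGcont.comp (continuous_id.add continuous_const)).intervalIntegrable _ _)
          (hGcont.intervalIntegrable _ _)
      have h4 : (∫ t in (0:ℝ)..T, G (t + 1/((n:ℝ)+1)))
          = ∫ t in (0 + 1/((n:ℝ)+1))..(T + 1/((n:ℝ)+1)), G t :=
        intervalIntegral.integral_comp_add_right (a := 0) (b := T) (f := G) _
      have h5 : Φ (0 + 1/((n:ℝ)+1)) + (∫ t in (0 + 1/((n:ℝ)+1))..(T + 1/((n:ℝ)+1)), G t)
          = Φ (T + 1/((n:ℝ)+1)) :=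
        intervalIntegral.integral_add_adjacent_intervals
          (hGcont.intervalIntegrable _ _) (hGcont.intervalIntegrable _ _)
      have h6 : Φ 0 = 0 := intervalIntegral.integral_same
      have h7 : Φ T = ∫ t in (0:ℝ)..T, G t := rfl
      rw [h1, h2, h3, h4, h6, h7]
      have h8 : (∫ t in (0 + 1/((n:ℝ)+1))..(T + 1/((n:ℝ)+1)), G t)
          = Φ (T + 1/((n:ℝ)+1)) - Φ (0 + 1/((n:ℝ)+1)) := by linarith
      rw [h8]
      ring
    have hlim2 : Filter.Tendsto (fun n => ∫ t, Sl n t ∂μ) Filter.atTop (𝓝 (G T - G 0)) := by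
      have l1 : Filter.Tendsto
          (fun n : ℕ => (1/((n:ℝ)+1))⁻¹ * (Φ (T + 1/((n:ℝ)+1)) - Φ T))
          Filter.atTop (𝓝 (G T)) := by
        have h := ((hΦderiv T).tendsto_slope_zero_right).comp hnto0
        refine Filter.Tendsto.congr (fun n => ?_) h
        simp [Function.comp, smul_eq_mul]
      have l0 : Filter.Tendsto
          (fun n : ℕ => (1/((n:ℝ)+1))⁻¹ * (Φ (0 + 1/((n:ℝ)+1)) - Φ 0))
          Filter.atTop (𝓝 (G 0)) := by
        have h := ((hΦderiv 0).tendsto_slope_zero_right).comp hnto0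
        refine Filter.Tendsto.congr (fun n => ?_) h
        simp [Function.comp, smul_eq_mul]
      exact Filter.Tendsto.congr (fun n => (hint_eq n).symm) (l1.sub l0)
    have hFTC : ∫ t, deriv G t ∂μ = G T - G 0 := tendsto_nhds_unique hDCT hlim2
    -- ### integrability and comparison
    have hint_deriv : MeasureTheory.Integrable (deriv G) μ := by
      refine ⟨hderiv_meas.aestronglyMeasurable, ?_⟩
      apply MeasureTheory.HasFiniteIntegral.of_bounded (C := M)
      exact Filter.Eventually.of_forall fun t => by
        rw [Real.norm_eq_abs]; exact hderiv_bound t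
    have hint_F : MeasureTheory.Integrable (fun t => L * F t) μ := by
      refine ⟨(hFmeas.const_mul L).aestronglyMeasurable, ?_⟩
      apply MeasureTheory.HasFiniteIntegral.of_bounded (C := L * C)
      refine Filter.Eventually.of_forall fun t => ?_
      rw [Real.norm_eq_abs, abs_mul, abs_of_pos hL0, abs_of_nonneg (hF0 t)]
      exact mul_le_mul_of_nonneg_left (hFC t) hL0.le
    have hmono : ∫ t, deriv G t ∂μ ≤ ∫ t, L * F t ∂μ :=
      MeasureTheory.integral_mono_ae hint_deriv hint_F hae_deriv
    have hcongr : ∫ t, F t ∂μ = ∫ t in (0:ℝ)..T,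
        Filter.liminf (fun h : ℝ => ‖w (t + h) - S h (w t)‖ / h) (𝓝[>] 0) := by
      rw [intervalIntegral.integral_of_le hT]
      apply MeasureTheory.integral_congr_ae
      rw [hμIoo]
      filter_upwards [MeasureTheory.ae_restrict_mem measurableSet_Ioo] with t ht
      have hFt : F t = Filter.liminf (fun h => Q t h) (𝓝[>] (0:ℝ)) := rfl
      rw [hFt]
      apply Filter.liminf_congr
      filter_upwards [Ioo_mem_nhdsGT (sub_pos.2 ht.2)] with h hh
      rw [hQapp, hWicc (t + h) ⟨by linarith [ht.1, hh.1], by linarith [hh.2]⟩,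
        hWicc t ⟨ht.1.le, ht.2.le⟩]
    calc ‖w T - S T (w 0)‖ = G T - G 0 := by rw [hGT, hG0, sub_zero]
      _ = ∫ t, deriv G t ∂μ := hFTC.symm
      _ ≤ ∫ t, L * F t ∂μ := hmono
      _ = L * ∫ t, F t ∂μ := by rw [MeasureTheory.integral_const_mul]
      _ = L * ∫ t in (0:ℝ)..T,
            Filter.liminf (fun h : ℝ => ‖w (t + h) - S h (w t)‖ / h) (𝓝[>] 0) := by
          rw [hcongr]
end
end

section
/- Let u : [0,∞) × ℝ → ℝⁿ be such that the map t ↦ u(t,·) is Lipschitz continuous with values in L¹(ℝ;ℝⁿ). Suppose u has an approximate jump at a point (τ,ξ) with τ > 0: there exist u⁻ ≠ u⁺ in ℝⁿ and λ ∈ ℝ such that, setting U(t,x) = u⁻ for x < λt and U(t,x) = u⁺ for x > λt, one has lim_{r→0+} r⁻² ∫_{-r}^{r} ∫_{-r}^{r} |u(τ+t, ξ+x) − U(t,x)| dx dt = 0. Then lim_{h→0+} (1/h) ∫_{-h}^{h} | u(τ+h, ξ+x) − U(h,x) | dx = 0. -/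
open MeasureTheory Filter Set Topology

noncomputable section

set_option maxHeartbeats 2000000 in
/-- **L¹ comparison with the jump at a point of approximate jump.**
Let `t ↦ u(t,·)` be Lipschitz continuous with values in `L¹(ℝ;ℝⁿ)` and suppose `u`
has an approximate jump at `(τ,ξ)`, `τ > 0`, with states `u⁻ ≠ u⁺` and speed `λ`:
setting `U(t,x) = u⁻` for `x < λ t`, `U(t,x) = u⁺` for `x > λ t`, the averaged
double integral of `|u(τ+t,ξ+x) - U(t,x)|` over `[-r,r]²` divided by `r²` tends
to `0` as `r → 0+`.  Then
`(1/h) ∫_{-h}^{h} |u(τ+h, ξ+x) - U(h,x)| dx → 0` as `h → 0+`. -/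
theorem approximate_jump_L1_limit
    {n : ℕ} (u : ℝ → ℝ → EuclideanSpace ℝ (Fin n))
    (hmeas : Measurable (Function.uncurry u))
    (hint : ∀ t : ℝ, Integrable (u t))
    (L : ℝ)
    (hLip : ∀ s t : ℝ, 0 ≤ s → 0 ≤ t →
      (∫ x : ℝ, ‖u t x - u s x‖) ≤ L * |t - s|)
    (τ ξ : ℝ) (hτ : 0 < τ)
    (um up : EuclideanSpace ℝ (Fin n)) (hne : um ≠ up) (lam : ℝ)
    (hjump : Tendsto
      (fun r : ℝ => (1 / r ^ 2) *
        ∫ t in (-r)..r, ∫ x in (-r)..r,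
          ‖u (τ + t) (ξ + x) - (if x < lam * t then um else up)‖)
      (𝓝[>] 0) (𝓝 0)) :
    Tendsto
      (fun h : ℝ => (1 / h) *
        ∫ x in (-h)..h, ‖u (τ + h) (ξ + x) - (if x < lam * h then um else up)‖)
      (𝓝[>] 0) (𝓝 0) := by
  classical
  set U : ℝ → ℝ → EuclideanSpace ℝ (Fin n) := fun t x => if x < lam * t then um else up with hUdef
  set f : ℝ → ℝ → ℝ := fun t x => ‖u (τ + t) (ξ + x) - U t x‖ with hfdef
  set ψ : ℝ → ℝ → ℝ := fun r t => ∫ x in (-r)..r, f t x with hψdef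
  set C : ℝ := L + ‖um - up‖ * |lam| with hCdef
  have hL : 0 ≤ L := by
    have h0 := hLip 0 1 le_rfl zero_le_one
    have h1 : (0:ℝ) ≤ ∫ x : ℝ, ‖u 1 x - u 0 x‖ := integral_nonneg fun x => norm_nonneg _
    have := h1.trans h0
    simpa using this
  have hCpos : 0 ≤ C := by positivity
  -- interval integrability of U t
  have hUint : ∀ t a b : ℝ, IntervalIntegrable (U t) volume a b := by
    intro t a b
    rw [intervalIntegrable_iff]
    apply Measure.integrableOn_of_bounded (M := max ‖um‖ ‖up‖)
    · exact ((measure_Ioc_lt_top).trans_le le_top).ne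
    · exact ((measurable_const.ite measurableSet_Iio measurable_const).aestronglyMeasurable)
    · filter_upwards with x
      by_cases h : x < lam * t <;> simp [hUdef, h, le_max_left, le_max_right]
  -- interval integrability of translated u
  have huint : ∀ t a b : ℝ, IntervalIntegrable (fun x => u t (ξ + x)) volume a b := by
    intro t a b
    exact ((hint t).comp_add_left ξ).intervalIntegrable
  have hfint : ∀ t a b : ℝ, IntervalIntegrable (f t) volume a b := by
    intro t a b
    exact ((huint (τ + t) a b).sub (hUint t a b)).norm
  -- nonnegativity of ψ
  have hψnonneg : ∀ r t : ℝ, 0 ≤ r → 0 ≤ ψ r t := by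
    intro r t hr
    exact intervalIntegral.integral_nonneg (by linarith) (fun x _ => norm_nonneg _)
  -- step 1 : L¹ bound on difference of U's
  have hUstep : ∀ s t r : ℝ,
      (∫ x in (-r)..r, ‖U t x - U s x‖) ≤ ‖um - up‖ * (|lam| * |t - s|) := by
    intro s t r
    set a := min (lam * s) (lam * t) with ha
    set b := max (lam * s) (lam * t) with hb
    have key : ∀ x : ℝ, ‖U t x - U s x‖ ≤
        (Set.Ico a b).indicator (fun _ => ‖um - up‖) x := by
      intro x
      by_cases h1 : x < lam * t <;> by_cases h2 : x < lam * s
      · simp [hUdef, h1, h2, Set.indicator_apply]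
        positivity
      · have hx : x ∈ Set.Ico a b := by
          constructor
          · exact le_trans (min_le_left _ _) (not_lt.1 h2)
          · exact lt_of_lt_of_le h1 (le_max_right _ _)
        simp [hUdef, h1, h2, Set.indicator_of_mem hx]
      · have hx : x ∈ Set.Ico a b := by
          constructor
          · exact le_trans (min_le_right _ _) (not_lt.1 h1)
          · exact lt_of_lt_of_le h2 (le_max_left _ _)
        rw [Set.indicator_of_mem hx]
        simp [hUdef, h1, h2, norm_sub_rev]
      · simp [hUdef, h1, h2, Set.indicator_apply]
        positivity
    have hind : Integrable ((Set.Ico a b).indicator (fun _ => ‖um - up‖)) volume := by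
      rw [integrable_indicator_iff measurableSet_Ico]
      exact integrableOn_const measure_Ico_lt_top.ne
    have hnorm : IntervalIntegrable (fun x => ‖U t x - U s x‖) volume (-r) r :=
      ((hUint t (-r) r).sub (hUint s (-r) r)).norm
    rcases le_or_gt (-r) r with hr | hr
    · calc (∫ x in (-r)..r, ‖U t x - U s x‖)
          ≤ ∫ x in (-r)..r, (Set.Ico a b).indicator (fun _ => ‖um - up‖) x := by
            apply intervalIntegral.integral_mono_on hr hnorm
              hind.intervalIntegrable (fun x _ => key x)
        _ = ∫ x in Set.Ioc (-r) r, (Set.Ico a b).indicator (fun _ => ‖um - up‖) x := by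
            rw [intervalIntegral.integral_of_le hr]
        _ ≤ ∫ x : ℝ, (Set.Ico a b).indicator (fun _ => ‖um - up‖) x := by
            apply setIntegral_le_integral hind
            filter_upwards with x
            exact Set.indicator_nonneg (fun _ _ => norm_nonneg _) x
        _ = (volume (Set.Ico a b)).toReal * ‖um - up‖ := by
            rw [integral_indicator_const _ measurableSet_Ico]; simp [smul_eq_mul, ENNReal.toReal_ofReal']
        _ ≤ ‖um - up‖ * (|lam| * |t - s|) := by
            rw [Real.volume_Ico, ENNReal.toReal_ofReal (sub_nonneg.2 min_le_max)]
            have hba : b - a = |lam * t - lam * s| := by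
              rw [hb, ha, max_sub_min_eq_abs, abs_sub_comm]
            rw [hba, ← mul_sub, abs_mul, mul_comm]
    · have h0 : (∫ x in (-r)..r, ‖U t x - U s x‖) ≤ 0 := by
        rw [intervalIntegral.integral_symm]
        have := intervalIntegral.integral_nonneg (μ := volume)
          (f := fun x => ‖U t x - U s x‖) (le_of_lt hr) (fun x _ => norm_nonneg _)
        linarith
      exact h0.trans (by positivity)
  -- step 2 : L¹ continuity in time
  have hustep : ∀ s t r : ℝ, 0 ≤ τ + s → 0 ≤ τ + t →
      (∫ x in (-r)..r, ‖u (τ + t) (ξ + x) - u (τ + s) (ξ + x)‖) ≤ L * |t - s| := by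
    intro s t r hs ht
    have hintg : Integrable (fun x => ‖u (τ + t) (ξ + x) - u (τ + s) (ξ + x)‖) volume :=
      (((hint (τ + t)).sub (hint (τ + s))).norm).comp_add_left ξ
    have hRnn : 0 ≤ L * |t - s| := mul_nonneg hL (abs_nonneg _)
    rcases le_or_gt (-r) r with hr | hr
    · calc (∫ x in (-r)..r, ‖u (τ + t) (ξ + x) - u (τ + s) (ξ + x)‖)
          = ∫ x in Set.Ioc (-r) r, ‖u (τ + t) (ξ + x) - u (τ + s) (ξ + x)‖ :=
            intervalIntegral.integral_of_le hr
        _ ≤ ∫ x : ℝ, ‖u (τ + t) (ξ + x) - u (τ + s) (ξ + x)‖ :=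
            setIntegral_le_integral hintg (by filter_upwards with x; exact norm_nonneg _)
        _ = ∫ x : ℝ, ‖u (τ + t) x - u (τ + s) x‖ :=
            integral_add_left_eq_self (fun x => ‖u (τ + t) x - u (τ + s) x‖) ξ
        _ ≤ L * |(τ + t) - (τ + s)| := hLip (τ + s) (τ + t) hs ht
        _ = L * |t - s| := by rw [add_sub_add_left_eq_sub]
    · have h0 : (∫ x in (-r)..r, ‖u (τ + t) (ξ + x) - u (τ + s) (ξ + x)‖) ≤ 0 := by
        rw [intervalIntegral.integral_symm]
        have := intervalIntegral.integral_nonneg (μ := volume)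
          (f := fun x => ‖u (τ + t) (ξ + x) - u (τ + s) (ξ + x)‖) (le_of_lt hr)
          (fun x _ => norm_nonneg _)
        linarith
      exact h0.trans hRnn
  -- step 3 : Lipschitz estimate for ψ in time
  have hψlip : ∀ r s t : ℝ, 0 ≤ r → 0 ≤ τ + s → 0 ≤ τ + t →
      ψ r t ≤ ψ r s + C * |t - s| := by
    intro r s t hr hs ht
    have hrr : -r ≤ r := by linarith
    have hptw : ∀ x : ℝ, f t x ≤ f s x +
        (‖u (τ + t) (ξ + x) - u (τ + s) (ξ + x)‖ + ‖U t x - U s x‖) := by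
      intro x
      have hdec : u (τ + t) (ξ + x) - U t x =
          (u (τ + s) (ξ + x) - U s x) +
            ((u (τ + t) (ξ + x) - u (τ + s) (ξ + x)) - (U t x - U s x)) := by abel
      calc f t x = ‖(u (τ + s) (ξ + x) - U s x) +
            ((u (τ + t) (ξ + x) - u (τ + s) (ξ + x)) - (U t x - U s x))‖ := by
              rw [hfdef]; simp only []; rw [hdec]
        _ ≤ ‖u (τ + s) (ξ + x) - U s x‖ +
            ‖(u (τ + t) (ξ + x) - u (τ + s) (ξ + x)) - (U t x - U s x)‖ := norm_add_le _ _
        _ ≤ f s x + (‖u (τ + t) (ξ + x) - u (τ + s) (ξ + x)‖ + ‖U t x - U s x‖) := by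
            exact add_le_add le_rfl (norm_sub_le _ _)
    have hii2 : IntervalIntegrable
        (fun x => ‖u (τ + t) (ξ + x) - u (τ + s) (ξ + x)‖) volume (-r) r :=
      ((huint (τ + t) (-r) r).sub (huint (τ + s) (-r) r)).norm
    have hii3 : IntervalIntegrable (fun x => ‖U t x - U s x‖) volume (-r) r :=
      ((hUint t (-r) r).sub (hUint s (-r) r)).norm
    have hmono := intervalIntegral.integral_mono_on hrr (hfint t (-r) r)
      ((hfint s (-r) r).add (hii2.add hii3)) (fun x _ => hptw x)
    rw [intervalIntegral.integral_add (hfint s (-r) r) (hii2.add hii3),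
      intervalIntegral.integral_add hii2 hii3] at hmono
    have h2 := hustep s t r hs ht
    have h3 := hUstep s t r
    calc ψ r t ≤ ψ r s + ((∫ x in (-r)..r, ‖u (τ + t) (ξ + x) - u (τ + s) (ξ + x)‖) +
          ∫ x in (-r)..r, ‖U t x - U s x‖) := hmono
      _ ≤ ψ r s + (L * |t - s| + ‖um - up‖ * (|lam| * |t - s|)) := by
          exact add_le_add le_rfl (add_le_add h2 h3)
      _ = ψ r s + C * |t - s| := by rw [hCdef]; ring
  -- Lipschitz continuity of ψ r on [-τ, ∞)
  have hψlipOn : ∀ r : ℝ, 0 ≤ r → LipschitzOnWith (Real.toNNReal C) (ψ r) (Ici (-τ)) := by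
    intro r hr
    rw [lipschitzOnWith_iff_dist_le_mul]
    intro t ht s hs
    rw [Real.dist_eq, Real.dist_eq, Real.coe_toNNReal C hCpos]
    have hts : 0 ≤ τ + t := by simp at ht; linarith
    have hss : 0 ≤ τ + s := by simp at hs; linarith
    have h1 := hψlip r s t hr hss hts
    have h2 := hψlip r t s hr hts hss
    rw [abs_sub_le_iff]
    constructor
    · linarith
    · rw [abs_sub_comm] at h2; linarith
  -- the main quantitative estimate
  have main : ∀ δ : ℝ, 0 < δ → δ ≤ 1 → ∀ h : ℝ, 0 < h → 2 * h < τ →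
      (1 / h) * ψ h h ≤
        (4 / δ) * ((1 / (2 * h) ^ 2) * ∫ t in (-(2 * h))..(2 * h), ψ (2 * h) t) + C * δ := by
    intro δ hδ hδ1 h hh hhτ
    have h2h : (0:ℝ) ≤ 2 * h := by linarith
    have hψc : IntervalIntegrable (ψ (2 * h)) volume (-(2 * h)) (2 * h) := by
      apply ContinuousOn.intervalIntegrable
      apply (hψlipOn (2 * h) h2h).continuousOn.mono
      rw [uIcc_of_le (by linarith)]
      intro x hx
      simp only [mem_Icc] at hx
      simp only [mem_Ici]
      linarith [hx.1]
    have hδh : 0 ≤ h - δ * h := by nlinarith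
    have hψc2 : IntervalIntegrable (ψ (2 * h)) volume (h - δ * h) h := by
      apply ContinuousOn.intervalIntegrable
      apply (hψlipOn (2 * h) h2h).continuousOn.mono
      rw [uIcc_of_le (by nlinarith)]
      intro x hx
      simp only [mem_Icc] at hx
      simp only [mem_Ici]
      linarith [hx.1]
    -- ψ h h ≤ ψ (2h) h
    have hA : ψ h h ≤ ψ (2 * h) h := by
      apply intervalIntegral.integral_mono_interval (by linarith) (by linarith) (by linarith)
        (Filter.Eventually.of_forall fun x => norm_nonneg _) (hfint h (-(2 * h)) (2 * h))
    -- pointwise Lipschitz bound on the averaging interval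
    have hB : ∀ t ∈ Icc (h - δ * h) h, ψ (2 * h) h ≤ ψ (2 * h) t + C * (δ * h) := by
      intro t ht
      have h1 : 0 ≤ τ + t := by linarith [ht.1]
      have hlip := hψlip (2 * h) t h h2h h1 (by linarith)
      have habs : |h - t| ≤ δ * h := by
        rw [abs_of_nonneg (by linarith [ht.2])]
        linarith [ht.1]
      have := mul_le_mul_of_nonneg_left habs hCpos
      linarith
    -- integrate the bound
    have hab : h - δ * h ≤ h := by nlinarith
    have hC1 : (δ * h) * ψ (2 * h) h ≤
        (∫ t in (h - δ * h)..h, ψ (2 * h) t) + (δ * h) * (C * (δ * h)) := by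
      have hmono := intervalIntegral.integral_mono_on hab
        (intervalIntegrable_const (c := ψ (2 * h) h))
        (hψc2.add (intervalIntegrable_const (c := C * (δ * h)))) (fun t ht => hB t ht)
      rw [intervalIntegral.integral_const,
        intervalIntegral.integral_add hψc2 (intervalIntegrable_const (c := C * (δ * h))),
        intervalIntegral.integral_const] at hmono
      have hlen : h - (h - δ * h) = δ * h := by ring
      rw [hlen, smul_eq_mul, smul_eq_mul] at hmono
      linarith
    -- extend the averaging interval
    have hD : (∫ t in (h - δ * h)..h, ψ (2 * h) t) ≤
        ∫ t in (-(2 * h))..(2 * h), ψ (2 * h) t := by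
      apply intervalIntegral.integral_mono_interval (by linarith) hab (by linarith)
        (Filter.Eventually.of_forall fun t => hψnonneg (2 * h) t h2h) hψc
    -- combine
    set I : ℝ := ∫ t in (-(2 * h))..(2 * h), ψ (2 * h) t with hI
    have key : δ * h * (ψ h h) ≤ I + C * δ ^ 2 * h ^ 2 := by
      have h1 : δ * h * (ψ h h) ≤ δ * h * (ψ (2 * h) h) := by
        apply mul_le_mul_of_nonneg_left hA (by positivity)
      nlinarith [hC1, hD]
    have hden : (0:ℝ) < δ * h ^ 2 := by positivity
    have e1 : (4 / δ) * ((1 / (2 * h) ^ 2) * I) + C * δ = (I + C * δ ^ 2 * h ^ 2) / (δ * h ^ 2) := by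
      field_simp
      ring
    have e2 : (1 / h) * ψ h h = (δ * h * (ψ h h)) / (δ * h ^ 2) := by
      field_simp
    rw [e1, e2]
    gcongr
  -- final limit argument
  show Tendsto (fun h : ℝ => (1 / h) * ψ h h) (𝓝[>] 0) (𝓝 0)
  rw [Metric.tendsto_nhds]
  intro ε hε
  have hC1pos : (0:ℝ) < C + 1 := by linarith
  set δ : ℝ := min (ε / (2 * (C + 1))) 1 with hδdef
  have hδpos : 0 < δ := lt_min (by positivity) one_pos
  have hδ1 : δ ≤ 1 := min_le_right _ _
  have hCδ : C * δ ≤ ε / 2 := by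
    calc C * δ ≤ (C + 1) * δ := by nlinarith
      _ ≤ (C + 1) * (ε / (2 * (C + 1))) := by
          exact mul_le_mul_of_nonneg_left (min_le_left _ _) (by linarith)
      _ = ε / 2 := by field_simp
  have h2h : Tendsto (fun h : ℝ => 2 * h) (𝓝[>] (0:ℝ)) (𝓝[>] (0:ℝ)) := by
    apply tendsto_nhdsWithin_of_tendsto_nhds_of_eventually_within
    · have : Tendsto (fun h : ℝ => 2 * h) (𝓝 (0:ℝ)) (𝓝 (2 * 0)) :=
        (continuous_const.mul continuous_id).tendsto 0
      rw [mul_zero] at this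
      exact this.mono_left nhdsWithin_le_nhds
    · filter_upwards [self_mem_nhdsWithin] with x hx
      exact mul_pos two_pos (Set.mem_Ioi.mp hx)
  have hJ : Tendsto (fun h : ℝ =>
      (4 / δ) * ((1 / (2 * h) ^ 2) * ∫ t in (-(2 * h))..(2 * h), ψ (2 * h) t))
      (𝓝[>] (0:ℝ)) (𝓝 ((4 / δ) * 0)) := by
    apply Tendsto.const_mul
    exact hjump.comp h2h
  rw [mul_zero] at hJ
  have hJε : ∀ᶠ h in 𝓝[>] (0:ℝ),
      (4 / δ) * ((1 / (2 * h) ^ 2) * ∫ t in (-(2 * h))..(2 * h), ψ (2 * h) t) < ε / 2 :=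
    hJ.eventually_lt_const (by linarith : (0:ℝ) < ε / 2)
  have hsmall : ∀ᶠ h in 𝓝[>] (0:ℝ), h ∈ Ioo 0 (τ / 2) :=
    Ioo_mem_nhdsGT_of_mem ⟨le_rfl, by linarith⟩
  filter_upwards [hJε, hsmall] with h hJh hh
  rw [Real.dist_0_eq_abs]
  have hφnn : 0 ≤ (1 / h) * ψ h h :=
    mul_nonneg (one_div_nonneg.2 hh.1.le) (hψnonneg h h hh.1.le)
  rw [abs_of_nonneg hφnn]
  calc (1 / h) * ψ h h
      ≤ (4 / δ) * ((1 / (2 * h) ^ 2) * ∫ t in (-(2 * h))..(2 * h), ψ (2 * h) t) + C * δ :=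
        main δ hδpos hδ1 h hh.1 (by linarith [hh.2])
    _ < ε / 2 + ε / 2 := add_lt_add_of_lt_of_le hJh hCδ
    _ = ε := by ring
end
end

section
/- Let f : ℝⁿ → ℝⁿ be twice continuously differentiable, let K ⊂ ℝⁿ be compact and convex, and let λ : K → ℝ and l : K → ℝⁿ be continuous maps satisfying l(u)·( Df(u) − λ(u) I ) = 0 for every u ∈ K (i.e. l(u) is a left eigenvector of the Jacobian Df(u) with eigenvalue λ(u)). Define F(u, u₁, u₂) = l(u) · [ ( f(u₁) − λ(u) u₁ ) − ( f(u₂) − λ(u) u₂ ) ]. Then there exists a constant C such that for all u, u₁, u₂ ∈ K: | F(u, u₁, u₂) | ≤ C · ( |u₁ − u| + |u₂ − u| ) · |u₁ − u₂|. -/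
open MeasureTheory Filter Set Topology
open scoped RealInnerProductSpace

noncomputable section

/-- **Quadratic smallness of the flux functional `F`.**
Let `f` be twice continuously differentiable, `K ⊂ ℝⁿ` compact and convex, and let
`λ : K → ℝ`, `l : K → ℝⁿ` be continuous with `l(u)·(Df(u) - λ(u) I) = 0` on `K`
(`l(u)` is a left eigenvector of `Df(u)` with eigenvalue `λ(u)`).  Setting
`F(u,u₁,u₂) = l(u) · [(f(u₁) - λ(u) u₁) - (f(u₂) - λ(u) u₂)]`, there is a constant
`C` with `|F(u,u₁,u₂)| ≤ C (|u₁ - u| + |u₂ - u|) |u₁ - u₂|` for all `u,u₁,u₂ ∈ K`. -/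
theorem quadratic_flux_estimate
    {n : ℕ} (f : EuclideanSpace ℝ (Fin n) → EuclideanSpace ℝ (Fin n))
    (hf : ContDiff ℝ 2 f)
    (K : Set (EuclideanSpace ℝ (Fin n))) (hK : IsCompact K) (hKconv : Convex ℝ K)
    (lam : EuclideanSpace ℝ (Fin n) → ℝ)
    (l : EuclideanSpace ℝ (Fin n) → EuclideanSpace ℝ (Fin n))
    (hlam : ContinuousOn lam K) (hl : ContinuousOn l K)
    (heig : ∀ u ∈ K, ∀ w : EuclideanSpace ℝ (Fin n),
      ⟪l u, fderiv ℝ f u w⟫ = lam u * ⟪l u, w⟫) :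
    ∃ C : ℝ, ∀ u ∈ K, ∀ u₁ ∈ K, ∀ u₂ ∈ K,
      |⟪l u, (f u₁ - lam u • u₁) - (f u₂ - lam u • u₂)⟫| ≤
        C * ((‖u₁ - u‖ + ‖u₂ - u‖) * ‖u₁ - u₂‖) := by
  -- f is C², so Df is C¹ and D²f is continuous
  have hDf : ContDiff ℝ 1 (fderiv ℝ f) := hf.fderiv_right (by norm_num)
  have hDf_diff : Differentiable ℝ (fderiv ℝ f) := hDf.differentiable one_ne_zero
  have hD2f_cont : Continuous (fderiv ℝ (fderiv ℝ f)) := hDf.continuous_fderiv one_ne_zero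
  -- bound L on ‖D²f‖ over K
  obtain ⟨L, hL⟩ := hK.exists_bound_of_continuousOn (f := fderiv ℝ (fderiv ℝ f)) hD2f_cont.continuousOn
  -- bound M on ‖l‖ over K
  obtain ⟨M, hM⟩ := hK.exists_bound_of_continuousOn hl
  -- Df is L-Lipschitz on K
  have hlip : ∀ x ∈ K, ∀ y ∈ K, ‖fderiv ℝ f x - fderiv ℝ f y‖ ≤ L * ‖x - y‖ := by
    intro x hx y hy
    exact hKconv.norm_image_sub_le_of_norm_fderiv_le
      (fun z _ => hDf_diff z) hL hy hx
  refine ⟨M * L, ?_⟩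
  intro u hu u₁ hu₁ u₂ hu₂
  have hM0 : (0:ℝ) ≤ M := le_trans (norm_nonneg _) (hM u hu)
  have hL0 : (0:ℝ) ≤ L := le_trans (norm_nonneg _) (hL u hu)
  set g : EuclideanSpace ℝ (Fin n) → ℝ :=
    fun x => ⟪l u, f x⟫ - lam u * ⟪l u, x⟫ with hg
  set D : EuclideanSpace ℝ (Fin n) → EuclideanSpace ℝ (Fin n) →L[ℝ] ℝ :=
    fun x => (innerSL ℝ (l u)).comp (fderiv ℝ f x) - lam u • (innerSL ℝ (l u)) with hD
  have hgderiv : ∀ x, HasFDerivAt g (D x) x := by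
    intro x
    have h1 : HasFDerivAt (fun x => ⟪l u, f x⟫)
        ((innerSL ℝ (l u)).comp (fderiv ℝ f x)) x :=
      (innerSL ℝ (l u)).hasFDerivAt.comp x (hf.differentiable (by norm_num) x).hasFDerivAt
    have h2 : HasFDerivAt (fun x => lam u * ⟪l u, x⟫)
        (lam u • (innerSL ℝ (l u))) x :=
      (innerSL ℝ (l u)).hasFDerivAt.const_mul (lam u)
    exact h1.sub h2
  -- D u = 0
  have hDu : D u = 0 := by
    ext w
    simp only [hD, ContinuousLinearMap.sub_apply, ContinuousLinearMap.comp_apply,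
      ContinuousLinearMap.smul_apply, innerSL_apply_apply, ContinuousLinearMap.zero_apply, smul_eq_mul]
    rw [heig u hu w]
    ring
  -- pointwise bound on ‖D x‖ for x on the segment
  have hseg : segment ℝ u₁ u₂ ⊆ K := hKconv.segment_subset hu₁ hu₂
  have hDbound : ∀ x ∈ segment ℝ u₁ u₂,
      ‖D x‖ ≤ M * L * (‖u₁ - u‖ + ‖u₂ - u‖) := by
    intro x hx
    have hxK : x ∈ K := hseg hx
    have hxu : ‖x - u‖ ≤ ‖u₁ - u‖ + ‖u₂ - u‖ := by
      obtain ⟨a, b, ha, hb, hab, rfl⟩ := hx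
      have ha1 : a ≤ 1 := by linarith
      have hb1 : b ≤ 1 := by linarith
      have hrw : a • u₁ + b • u₂ - u = a • (u₁ - u) + b • (u₂ - u) := by
        have hu' : u = (a + b) • u := by rw [hab, one_smul]
        nth_rewrite 1 [hu']
        module
      rw [hrw]
      calc ‖a • (u₁ - u) + b • (u₂ - u)‖
          ≤ ‖a • (u₁ - u)‖ + ‖b • (u₂ - u)‖ := norm_add_le _ _
        _ = a * ‖u₁ - u‖ + b * ‖u₂ - u‖ := by
            rw [norm_smul, norm_smul, Real.norm_eq_abs, Real.norm_eq_abs,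
              abs_of_nonneg ha, abs_of_nonneg hb]
        _ ≤ ‖u₁ - u‖ + ‖u₂ - u‖ := by
            nlinarith [norm_nonneg (u₁ - u), norm_nonneg (u₂ - u)]
    calc ‖D x‖ = ‖D x - D u‖ := by rw [hDu, sub_zero]
      _ = ‖(innerSL ℝ (l u)).comp (fderiv ℝ f x - fderiv ℝ f u)‖ := by
          congr 1
          ext w
          simp [hD, inner_sub_right]
      _ ≤ ‖innerSL ℝ (l u)‖ * ‖fderiv ℝ f x - fderiv ℝ f u‖ :=
          ContinuousLinearMap.opNorm_comp_le _ _
      _ ≤ M * (L * ‖x - u‖) := by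
          rw [innerSL_apply_norm]
          exact mul_le_mul (hM u hu) (hlip x hxK u hu) (norm_nonneg _) hM0
      _ ≤ M * L * (‖u₁ - u‖ + ‖u₂ - u‖) := by
          rw [mul_assoc]
          exact mul_le_mul_of_nonneg_left (mul_le_mul_of_nonneg_left hxu hL0) hM0
  have key : ‖g u₁ - g u₂‖ ≤ M * L * (‖u₁ - u‖ + ‖u₂ - u‖) * ‖u₁ - u₂‖ :=
    (convex_segment u₁ u₂).norm_image_sub_le_of_norm_fderiv_le
      (fun x _ => (hgderiv x).differentiableAt)
      (fun x hx => by rw [(hgderiv x).fderiv]; exact hDbound x hx)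
      (right_mem_segment ℝ u₁ u₂) (left_mem_segment ℝ u₁ u₂)
  have heq : ⟪l u, (f u₁ - lam u • u₁) - (f u₂ - lam u • u₂)⟫ = g u₁ - g u₂ := by
    simp only [hg, inner_sub_right, inner_smul_right]
  rw [heq, ← Real.norm_eq_abs]
  calc ‖g u₁ - g u₂‖ ≤ M * L * (‖u₁ - u‖ + ‖u₂ - u‖) * ‖u₁ - u₂‖ := key
    _ = M * L * ((‖u₁ - u‖ + ‖u₂ - u‖) * ‖u₁ - u₂‖) := by ring
end
end
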